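/- Let X ⊂ ℝ^p and Y ⊂ ℝ^q be compact sets, let α, β be finite positive Radon measures on X, Y with m(α) = m(β), and let π ∈ Π(α,β) be a coupling. Then the Gromov–Wasserstein inner-product objective satisfies the identity ∫∫_{(X×Y)²} (⟨x,x'⟩ − ⟨y,y'⟩)² dπ(x,y) dπ(x',y') = ∫∫_{X×X} ⟨x,x'⟩² dα(x) dα(x') + ∫∫_{Y×Y} ⟨y,y'⟩² dβ(y) dβ(y') − 2·‖∫_{X×Y} y xᵀ dπ(x,y)‖_F². Consequently, over π ∈ Π(α,β), minimizing the left-hand side is equivalent to maximizing ‖∫ y xᵀ dπ‖_F. -/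

import Mathlib

open MeasureTheory Filter Set Pointwise
open scoped ENNReal NNReal

noncomputable section

/-- The Frobenius norm of a real `q × p` matrix. -/
def frobNorm {q p : ℕ} (M : Matrix (Fin q) (Fin p) ℝ) : ℝ :=
  Real.sqrt (∑ i, ∑ j, (M i j) ^ 2)

/-- `C(π) = ∫ y xᵀ dπ(x,y)`, the entrywise integral of `(x,y) ↦ y xᵀ`. -/
def Cmat {p q : ℕ} (π : Measure ((Fin p → ℝ) × (Fin q → ℝ))) :
    Matrix (Fin q) (Fin p) ℝ :=
  Matrix.of fun i j => ∫ z, z.2 i * z.1 j ∂π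

/-- `∫ ⟨Mx, y⟩ dπ(x,y)` with the Euclidean inner product on `ℝ^q`. -/
def ipIntegral {p q : ℕ} (M : Matrix (Fin q) (Fin p) ℝ)
    (π : Measure ((Fin p → ℝ) × (Fin q → ℝ))) : ℝ :=
  ∫ z, ∑ i, ∑ j, M i j * z.1 j * z.2 i ∂π

/-- `M(π) = r·C(π)/‖C(π)‖_F` if `C(π) ≠ 0`, and `0` otherwise. -/
def Mopt {p q : ℕ} (r : ℝ) (π : Measure ((Fin p → ℝ) × (Fin q → ℝ))) :
    Matrix (Fin q) (Fin p) ℝ :=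
  if Cmat π = 0 then 0 else (r / frobNorm (Cmat π)) • Cmat π

/-- The Gromov–Wasserstein inner-product objective
`∫∫ (⟨x,x'⟩ − ⟨y,y'⟩)² dπ dπ`. -/
def gwObj {p q : ℕ} (π : Measure ((Fin p → ℝ) × (Fin q → ℝ))) : ℝ :=
  ∫ z, ∫ z', ((∑ j, z.1 j * z'.1 j) - (∑ i, z.2 i * z'.2 i)) ^ 2 ∂π ∂π

lemma aux_integrable {Z : Type*} [MeasurableSpace Z] (μ : Measure Z) [IsFiniteMeasure μ]
    {s : Set Z} (hs : μ sᶜ = 0) {g : Z → ℝ} (hg : AEStronglyMeasurable g μ)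
    {M : ℝ} (hM : ∀ z ∈ s, |g z| ≤ M) : Integrable g μ := by
  refine (integrable_const M).mono' hg ?_
  have h1 : ∀ᵐ z ∂μ, z ∈ s := by
    rw [ae_iff]
    exact hs
  filter_upwards [h1] with z hz
  simpa [Real.norm_eq_abs] using hM z hz

lemma key0 {Z : Type*} [MeasurableSpace Z] (μ : Measure Z)
    {ι : Type*} [Fintype ι] (f : ι → Z → ℝ) (ε : ι → ℝ)
    (hprod : ∀ i i', Integrable (fun z => f i z * f i' z) μ) :
    ∫ z, ∫ z', (∑ i, ε i * (f i z * f i z')) ^ 2 ∂μ ∂μ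
      = ∑ i, ∑ i', ε i * ε i' * (∫ z, f i z * f i' z ∂μ) ^ 2 := by
  have hinner : ∀ z, ∫ z', (∑ i, ε i * (f i z * f i z')) ^ 2 ∂μ
      = ∑ i, ∑ i', (ε i * ε i' * (f i z * f i' z)) * ∫ z', f i z' * f i' z' ∂μ := by
    intro z
    have hexp : ∀ z', (∑ i, ε i * (f i z * f i z')) ^ 2
        = ∑ i, ∑ i', (ε i * ε i' * (f i z * f i' z)) * (f i z' * f i' z') := by
      intro z'
      rw [sq, Finset.sum_mul_sum]
      refine Finset.sum_congr rfl fun i _ => Finset.sum_congr rfl fun i' _ => by ring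
    simp_rw [hexp]
    rw [integral_finset_sum _ (fun i _ => integrable_finset_sum _
      (fun i' _ => (hprod i i').const_mul _))]
    refine Finset.sum_congr rfl fun i _ => ?_
    rw [integral_finset_sum _ (fun i' _ => (hprod i i').const_mul _)]
    exact Finset.sum_congr rfl fun i' _ => integral_const_mul _ _
  simp_rw [hinner]
  rw [integral_finset_sum _ (fun i _ => integrable_finset_sum _
    (fun i' _ => ((hprod i i').const_mul _).mul_const _))]
  refine Finset.sum_congr rfl fun i _ => ?_
  rw [integral_finset_sum _ (fun i' _ => ((hprod i i').const_mul _).mul_const _)]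
  refine Finset.sum_congr rfl fun i' _ => ?_
  rw [integral_mul_const, integral_const_mul]
  ring

lemma keyEq {p q : ℕ}
    {X : Set (Fin p → ℝ)} {Y : Set (Fin q → ℝ)}
    (hX : IsCompact X) (hY : IsCompact Y)
    (α : Measure (Fin p → ℝ)) (β : Measure (Fin q → ℝ))
    [IsFiniteMeasure α] [IsFiniteMeasure β]
    (hαsupp : α Xᶜ = 0) (hβsupp : β Yᶜ = 0)
    (π : Measure ((Fin p → ℝ) × (Fin q → ℝ))) [IsFiniteMeasure π]
    (hfst : π.map Prod.fst = α) (hsnd : π.map Prod.snd = β) :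
    gwObj π = (∫ x, ∫ x', (∑ j, x j * x' j) ^ 2 ∂α ∂α)
        + (∫ y, ∫ y', (∑ i, y i * y' i) ^ 2 ∂β ∂β)
        - 2 * (frobNorm (Cmat π)) ^ 2 := by
  classical
  -- bounds
  obtain ⟨Rx, hRx⟩ := (Metric.isBounded_iff_subset_closedBall 0).mp hX.isBounded
  obtain ⟨Ry, hRy⟩ := (Metric.isBounded_iff_subset_closedBall 0).mp hY.isBounded
  set M : ℝ := max (max Rx Ry) 0 with hMdef
  have hM0 : (0:ℝ) ≤ M := le_max_right _ _
  have hXb : ∀ x ∈ X, ∀ j, |x j| ≤ M := by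
    intro x hx j
    have h1 : ‖x‖ ≤ Rx := by simpa using hRx hx
    calc |x j| = ‖x j‖ := rfl
      _ ≤ ‖x‖ := norm_le_pi_norm x j
      _ ≤ M := h1.trans ((le_max_left _ _).trans (le_max_left _ _))
  have hYb : ∀ y ∈ Y, ∀ i, |y i| ≤ M := by
    intro y hy i
    have h1 : ‖y‖ ≤ Ry := by simpa using hRy hy
    calc |y i| = ‖y i‖ := rfl
      _ ≤ ‖y‖ := norm_le_pi_norm y i
      _ ≤ M := h1.trans ((le_max_right _ _).trans (le_max_left _ _))
  -- support of π
  have hπnull : π ((X ×ˢ Y)ᶜ) = 0 := by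
    have h1 : π (Prod.fst ⁻¹' Xᶜ) = 0 := by
      rw [← Measure.map_apply measurable_fst hX.isClosed.measurableSet.compl, hfst]
      exact hαsupp
    have h2 : π (Prod.snd ⁻¹' Yᶜ) = 0 := by
      rw [← Measure.map_apply measurable_snd hY.isClosed.measurableSet.compl, hsnd]
      exact hβsupp
    rw [Set.compl_prod_eq_union]
    refine measure_union_null ?_ ?_
    · rw [Set.prod_univ]; exact h1
    · rw [Set.univ_prod]; exact h2
  -- the family
  set f : (Fin p ⊕ Fin q) → ((Fin p → ℝ) × (Fin q → ℝ)) → ℝ :=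
    Sum.elim (fun j z => z.1 j) (fun i z => z.2 i) with hfdef
  set ε : (Fin p ⊕ Fin q) → ℝ := Sum.elim (fun _ => (1:ℝ)) (fun _ => -1) with hεdef
  have hcont : ∀ k, Continuous (f k) := by
    rintro (j | i)
    · exact (continuous_apply j).comp continuous_fst
    · exact (continuous_apply i).comp continuous_snd
  have hbd : ∀ k, ∀ z ∈ X ×ˢ Y, |f k z| ≤ M := by
    rintro (j | i) z hz
    · exact hXb z.1 hz.1 j
    · exact hYb z.2 hz.2 i
  have hprodπ : ∀ k k', Integrable (fun z => f k z * f k' z) π := by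
    intro k k'
    refine aux_integrable π hπnull (((hcont k).mul (hcont k')).aestronglyMeasurable)
      (M := M * M) ?_
    intro z hz
    rw [abs_mul]
    exact mul_le_mul (hbd k z hz) (hbd k' z hz) (abs_nonneg _) hM0
  have hprodα : ∀ j j' : Fin p, Integrable (fun x => x j * x j') α := by
    intro j j'
    refine aux_integrable α hαsupp
      (((continuous_apply j).mul (continuous_apply j')).aestronglyMeasurable) (M := M * M) ?_
    intro x hx
    rw [abs_mul]
    exact mul_le_mul (hXb x hx j) (hXb x hx j') (abs_nonneg _) hM0
  have hprodβ : ∀ i i' : Fin q, Integrable (fun y => y i * y i') β := by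
    intro i i'
    refine aux_integrable β hβsupp
      (((continuous_apply i).mul (continuous_apply i')).aestronglyMeasurable) (M := M * M) ?_
    intro y hy
    rw [abs_mul]
    exact mul_le_mul (hYb y hy i) (hYb y hy i') (abs_nonneg _) hM0
  -- step 1: gwObj as big sum
  have step1 : gwObj π = ∑ k, ∑ k', ε k * ε k' * (∫ z, f k z * f k' z ∂π) ^ 2 := by
    rw [← key0 π f ε hprodπ, gwObj]
    refine integral_congr_ae (ae_of_all _ fun z =>
      integral_congr_ae (ae_of_all _ fun z' => ?_))
    simp only [Fintype.sum_sum_type, hfdef, hεdef, Sum.elim_inl, Sum.elim_inr, one_mul,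
      neg_one_mul, Finset.sum_neg_distrib]
    ring
  -- translation of π-integrals
  have hmapα : ∀ j j' : Fin p, ∫ z, f (Sum.inl j) z * f (Sum.inl j') z ∂π
      = ∫ x, x j * x j' ∂α := by
    intro j j'
    rw [← hfst, integral_map measurable_fst.aemeasurable
      (((continuous_apply j).mul (continuous_apply j')).aestronglyMeasurable)]
    rfl
  have hmapβ : ∀ i i' : Fin q, ∫ z, f (Sum.inr i) z * f (Sum.inr i') z ∂π
      = ∫ y, y i * y i' ∂β := by
    intro i i'
    rw [← hsnd, integral_map measurable_snd.aemeasurable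
      (((continuous_apply i).mul (continuous_apply i')).aestronglyMeasurable)]
    rfl
  -- A and B
  have hA : ∫ x, ∫ x', (∑ j, x j * x' j) ^ 2 ∂α ∂α
      = ∑ j, ∑ j', (∫ x, x j * x j' ∂α) ^ 2 := by
    have h := key0 α (fun j (x : Fin p → ℝ) => x j) (fun _ => 1) hprodα
    simpa using h
  have hB : ∫ y, ∫ y', (∑ i, y i * y' i) ^ 2 ∂β ∂β
      = ∑ i, ∑ i', (∫ y, y i * y i' ∂β) ^ 2 := by
    have h := key0 β (fun i (y : Fin q → ℝ) => y i) (fun _ => 1) hprodβ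
    simpa using h
  -- Frobenius norm
  have hfrob : (frobNorm (Cmat π)) ^ 2
      = ∑ i, ∑ j, (∫ z, f (Sum.inr i) z * f (Sum.inl j) z ∂π) ^ 2 := by
    rw [frobNorm, Real.sq_sqrt (by positivity)]
    rfl
  have hsym : ∀ (j : Fin p) (i : Fin q),
      ∫ z, f (Sum.inl j) z * f (Sum.inr i) z ∂π
        = ∫ z, f (Sum.inr i) z * f (Sum.inl j) z ∂π := by
    intro j i
    congr 1
    funext z
    ring
  rw [step1, hA, hB, hfrob]
  rw [Fintype.sum_sum_type]
  simp only [Fintype.sum_sum_type, hεdef, Sum.elim_inl, Sum.elim_inr, one_mul, neg_one_mul,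
    mul_one, neg_neg, neg_mul]
  rw [Finset.sum_add_distrib, Finset.sum_add_distrib]
  simp_rw [hmapα, hmapβ, hsym]
  rw [Finset.sum_comm (f := fun j i => -(∫ z, f (Sum.inr i) z * f (Sum.inl j) z ∂π) ^ 2)]
  simp only [Finset.sum_neg_distrib]
  ring

/-- **Decomposition of the Gromov–Wasserstein inner-product objective.** For a coupling
`π ∈ Π(α,β)` of finite positive measures of equal mass supported on compact sets,
`∫∫ (⟨x,x'⟩−⟨y,y'⟩)² dπ dπ = ∫∫ ⟨x,x'⟩² dα dα + ∫∫ ⟨y,y'⟩² dβ dβ − 2‖∫ yxᵀ dπ‖_F²`;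
consequently, over couplings, minimizing the GW objective is equivalent to maximizing
`‖∫ yxᵀ dπ‖_F`. -/
theorem stmt6 {p q : ℕ}
    (X : Set (Fin p → ℝ)) (Y : Set (Fin q → ℝ))
    (hX : IsCompact X) (hY : IsCompact Y)
    (α : Measure (Fin p → ℝ)) (β : Measure (Fin q → ℝ))
    [IsFiniteMeasure α] [IsFiniteMeasure β]
    (hαsupp : α Xᶜ = 0) (hβsupp : β Yᶜ = 0)
    (hmass : α Set.univ = β Set.univ) :
    (∀ π : Measure ((Fin p → ℝ) × (Fin q → ℝ)), IsFiniteMeasure π →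
      π.map Prod.fst = α → π.map Prod.snd = β →
      gwObj π = (∫ x, ∫ x', (∑ j, x j * x' j) ^ 2 ∂α ∂α)
        + (∫ y, ∫ y', (∑ i, y i * y' i) ^ 2 ∂β ∂β)
        - 2 * (frobNorm (Cmat π)) ^ 2) ∧
    (∀ π π' : Measure ((Fin p → ℝ) × (Fin q → ℝ)),
      IsFiniteMeasure π → π.map Prod.fst = α → π.map Prod.snd = β →
      IsFiniteMeasure π' → π'.map Prod.fst = α → π'.map Prod.snd = β →
      (gwObj π ≤ gwObj π' ↔ frobNorm (Cmat π') ≤ frobNorm (Cmat π))) := by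
  constructor
  · intro π hfin hf hs
    haveI := hfin
    exact keyEq hX hY α β hαsupp hβsupp π hf hs
  · intro π π' h1 h2 h3 h1' h2' h3'
    haveI := h1; haveI := h1'
    rw [keyEq hX hY α β hαsupp hβsupp π h2 h3,
      keyEq hX hY α β hαsupp hβsupp π' h2' h3']
    have ha : 0 ≤ frobNorm (Cmat π) := Real.sqrt_nonneg _
    have hb : 0 ≤ frobNorm (Cmat π') := Real.sqrt_nonneg _
    constructor
    · intro h
      nlinarith [sq_nonneg (frobNorm (Cmat π) - frobNorm (Cmat π')),
        sq_nonneg (frobNorm (Cmat π) + frobNorm (Cmat π'))]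
    · intro h
      nlinarith [pow_le_pow_left₀ hb h 2]
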